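/- The function v_a(n,m) = −2cpq/(a(pq + 2c(mp+nq))) + 1 satisfies the lattice potential modified KdV equation v_a((p−a)v̂_a − (q−a)ṽ_a) = v̂̃_a((p+a)ṽ_a − (q+a)v̂_a), at all lattice points where the denominators are nonzero. -/

import Mathlib

/-- The N=2 rational solution `v_a(n,m) = −2cpq/(a(pq + 2c(mp+nq))) + 1` satisfies
the lattice potential modified KdV equation
`v_a((p−a)v̂_a − (q−a)ṽ_a) = v̂̃_a((p+a)ṽ_a − (q+a)v̂_a)`. -/
theorem stmt_2 (p q c a : ℝ) (hp : p ≠ 0) (hq : q ≠ 0) (hc : c ≠ 0) (ha : a ≠ 0)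
    (v : ℤ → ℤ → ℝ)
    (hv : ∀ n m : ℤ, v n m = -(2*c*p*q) / (a * (p*q + 2*c*((m : ℝ)*p + (n : ℝ)*q))) + 1)
    (n m : ℤ)
    (h1 : p*q + 2*c*((m : ℝ)*p + (n : ℝ)*q) ≠ 0)
    (h2 : p*q + 2*c*((m : ℝ)*p + ((n : ℝ)+1)*q) ≠ 0)
    (h3 : p*q + 2*c*(((m : ℝ)+1)*p + (n : ℝ)*q) ≠ 0)
    (h4 : p*q + 2*c*(((m : ℝ)+1)*p + ((n : ℝ)+1)*q) ≠ 0) :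
    v n m * ((p - a) * v n (m+1) - (q - a) * v (n+1) m)
      = v (n+1) (m+1) * ((p + a) * v (n+1) m - (q + a) * v n (m+1)) := by
  rw [hv n m, hv n (m+1), hv (n+1) m, hv (n+1) (m+1)]
  push_cast
  rw [div_add_one (mul_ne_zero ha h1), div_add_one (mul_ne_zero ha h2), div_add_one (mul_ne_zero ha h3), div_add_one (mul_ne_zero ha h4)]
  rw [div_mul_eq_mul_div, div_mul_eq_mul_div, mul_div_assoc', mul_div_assoc', mul_div_assoc', mul_div_assoc', div_sub_div _ _ (mul_ne_zero ha h3) (mul_ne_zero ha h2), div_sub_div _ _ (mul_ne_zero ha h2) (mul_ne_zero ha h3), mul_div_assoc', mul_div_assoc', div_div, div_div, div_eq_div_iff (mul_ne_zero (mul_ne_zero (mul_ne_zero ha h3) (mul_ne_zero ha h2)) (mul_ne_zero ha h1)) (mul_ne_zero (mul_ne_zero (mul_ne_zero ha h2) (mul_ne_zero ha h3)) (mul_ne_zero ha h4))]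
  ring
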